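/- arXiv:1801.06279 — 5 statements merged into one kernel-verified Lean document; each statement's English description precedes it below -/
import Mathlib

section
/- Let R_aa, R_uu be symmetric real matrices of sizes m×m and s×s, R_au an m×s real matrix, and D a symmetric positive definite m×m matrix. If the block matrix R = [[R_aa, R_au],[R_au^T, R_uu]] is positive semi-definite and 3D - R_aa is positive semi-definite, then the (not necessarily symmetric) 3×3 block matrix R_1 = [[R_aa + D, R_au, D],[R_au^T, R_uu, 0],[R_aa, R_au, D]] satisfies x^T R_1 x ≥ 0 for all vectors x ∈ ℝ^{m+s+m}. -/
open Matrix

theorem stmt_1 {m s : ℕ}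
    (Raa D : Matrix (Fin m) (Fin m) ℝ) (Ruu : Matrix (Fin s) (Fin s) ℝ)
    (Rau : Matrix (Fin m) (Fin s) ℝ)
    (hRaa : Raa.IsSymm) (hRuu : Ruu.IsSymm) (hDsymm : D.IsSymm) (hD : D.PosDef)
    (hR : (Matrix.fromBlocks Raa Rau Rauᵀ Ruu).PosSemidef)
    (hbound : ((3 : ℝ) • D - Raa).PosSemidef) :
    ∀ x : (Fin m ⊕ (Fin s ⊕ Fin m)) → ℝ,
      0 ≤ x ⬝ᵥ (Matrix.fromBlocks (Raa + D) (Matrix.fromCols Rau D)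
          (Matrix.fromRows Rauᵀ Raa) (Matrix.fromBlocks Ruu 0 Rau D)).mulVec x := by
  intro x
  set a : Fin m → ℝ := fun i => x (Sum.inl i) with ha
  set u : Fin s → ℝ := fun i => x (Sum.inr (Sum.inl i)) with hu
  set b : Fin m → ℝ := fun i => x (Sum.inr (Sum.inr i)) with hb
  have hx : x = Sum.elim a (Sum.elim u b) := by
    funext i; rcases i with i | i | i <;> rfl
  set z : Fin m → ℝ := a + (1/2 : ℝ) • b with hz
  have h1 := hR.dotProduct_mulVec_nonneg (Sum.elim z u)
  have h2 := hD.posSemidef.dotProduct_mulVec_nonneg z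
  have h3 := hbound.dotProduct_mulVec_nonneg b
  simp only [star_trivial] at h1 h2 h3
  -- symmetry facts
  have sRaa : ∀ v w : Fin m → ℝ, v ⬝ᵥ Raa *ᵥ w = w ⬝ᵥ Raa *ᵥ v := by
    intro v w
    rw [dotProduct_mulVec, ← Matrix.mulVec_transpose, hRaa.eq, dotProduct_comm]
  have sD : ∀ v w : Fin m → ℝ, v ⬝ᵥ D *ᵥ w = w ⬝ᵥ D *ᵥ v := by
    intro v w
    rw [dotProduct_mulVec, ← Matrix.mulVec_transpose, hDsymm.eq, dotProduct_comm]
  have sT : ∀ (v : Fin s → ℝ) (w : Fin m → ℝ), v ⬝ᵥ Rauᵀ *ᵥ w = w ⬝ᵥ Rau *ᵥ v := by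
    intro v w
    rw [dotProduct_mulVec, ← Matrix.mulVec_transpose, transpose_transpose, dotProduct_comm]
  rw [hx]
  simp only [fromBlocks_mulVec, sumElim_dotProduct_sumElim, fromRows_mulVec,
    fromCols_mulVec_sumElim, hz, mulVec_add, mulVec_smul, dotProduct_add,
    add_dotProduct, smul_dotProduct, dotProduct_smul, Matrix.add_mulVec,
    Matrix.sub_mulVec, Matrix.smul_mulVec, dotProduct_sub, smul_eq_mul,
    Matrix.zero_mulVec, add_zero, dotProduct_zero, Sum.elim_comp_inl, Sum.elim_comp_inr] at h1 h2 h3 ⊢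
  rw [sRaa b a, sD b a, sT u a, sT u b] at *
  nlinarith [h1, h2, h3]
end

section
/- Let R_aa, R_uu be symmetric PSD-compatible blocks with [[R_aa, R_au],[R_au^T, R_uu]] positive semi-definite, and D symmetric positive definite with 3D - R_aa ⪰ 0. Then the symmetric part of R_1 = [[R_aa + D, R_au, D],[R_au^T, R_uu, 0],[R_aa, R_au, D]], namely (R_1 + R_1^T)/2 = [[R_aa + D, R_au, (R_aa + D)/2],[R_au^T, R_uu, R_au^T/2],[(R_aa + D)/2, R_au/2, D]], is positive semi-definite. -/
open Matrix

theorem stmt_2 {m s : ℕ}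
    (Raa D : Matrix (Fin m) (Fin m) ℝ) (Ruu : Matrix (Fin s) (Fin s) ℝ)
    (Rau : Matrix (Fin m) (Fin s) ℝ)
    (hRaa : Raa.IsSymm) (hRuu : Ruu.IsSymm) (hDsymm : D.IsSymm) (hD : D.PosDef)
    (hR : (Matrix.fromBlocks Raa Rau Rauᵀ Ruu).PosSemidef)
    (hbound : ((3 : ℝ) • D - Raa).PosSemidef) :
    (Matrix.fromBlocks (Raa + D) (Matrix.fromCols Rau (((1 : ℝ) / 2) • (Raa + D)))
        (Matrix.fromRows Rauᵀ (((1 : ℝ) / 2) • (Raa + D)))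
        (Matrix.fromBlocks Ruu (((1 : ℝ) / 2) • Rauᵀ) (((1 : ℝ) / 2) • Rau) D)).PosSemidef := by
  refine posSemidef_iff_dotProduct_mulVec.mpr ⟨?_, ?_⟩
  · unfold Matrix.IsHermitian
    simp only [fromBlocks_conjTranspose,
      conjTranspose_fromCols_eq_fromRows_conjTranspose,
      conjTranspose_fromRows_eq_fromCols_conjTranspose]
    simp [conjTranspose, transpose_add, transpose_smul, hRaa.eq, hRuu.eq, hDsymm.eq,
        show ⇑(starRingEnd ℝ) = id from funext fun _ => rfl, Matrix.map_id]
  · intro x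
    set a : Fin m → ℝ := x ∘ Sum.inl with ha
    set u : Fin s → ℝ := x ∘ (Sum.inr ∘ Sum.inl) with hu
    set b : Fin m → ℝ := x ∘ (Sum.inr ∘ Sum.inr) with hb
    have hx : x = Sum.elim a (Sum.elim u b) := by
      funext i; rcases i with i | i | i <;> rfl
    set c : Fin m → ℝ := a + (1/2 : ℝ) • b with hc
    have h1 := hR.dotProduct_mulVec_nonneg (Sum.elim c u)
    have h2 := hD.posSemidef.dotProduct_mulVec_nonneg c
    have h3 := hbound.dotProduct_mulVec_nonneg b
    simp only [star_trivial, fromBlocks_mulVec, sumElim_dotProduct_sumElim,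
      fromCols_mulVec_sumElim, fromRows_mulVec, dotProduct_add, add_dotProduct,
      mulVec_add, mulVec_smul, add_mulVec, smul_mulVec, dotProduct_smul,
      smul_dotProduct, sub_mulVec, dotProduct_sub, smul_eq_mul, hx, hc,
      Sum.elim_comp_inl, Sum.elim_comp_inr] at *
    nlinarith [h1, h2, h3]
end

section
/- Suppose the matrix R_1 (with quadratic form nonnegative) and R_2 = [[D_{c1}+D_{c2}, 0, D_{c1}],[0,0,0],[D_{c1},0,D_{c1}]] are as in the robust integral action closed loop. Then along solutions of ẇ = (𝒥 - R_1 - R_2)∇𝒲, one has d𝒲/dt ≤ -‖∇_{w_a}𝒲‖²_{D_{c2}} - ‖∇_{w_a}𝒲 + ∇_{w_c}𝒲‖²_{D_{c1}}. -/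
open Matrix

/-- View a plain vector as an element of Euclidean space. -/
noncomputable def toE {ι : Type*} [Fintype ι] (v : ι → ℝ) : EuclideanSpace ℝ ι :=
  (WithLp.equiv 2 _).symm v

/-- View an element of Euclidean space as a plain vector. -/
def toV {ι : Type*} [Fintype ι] (v : EuclideanSpace ℝ ι) : ι → ℝ :=
  WithLp.equiv 2 _ v

theorem stmt_14 {m s : ℕ}
    (J R1 : EuclideanSpace ℝ (Fin m ⊕ (Fin s ⊕ Fin m)) →
      Matrix (Fin m ⊕ (Fin s ⊕ Fin m)) (Fin m ⊕ (Fin s ⊕ Fin m)) ℝ)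
    (hJ : ∀ w, (J w)ᵀ = -(J w))
    (hR1 : ∀ w, ∀ v : Fin m ⊕ (Fin s ⊕ Fin m) → ℝ, 0 ≤ v ⬝ᵥ (R1 w).mulVec v)
    (Dc1 Dc2 : Matrix (Fin m) (Fin m) ℝ)
    (hDc1symm : Dc1.IsSymm) (hDc2symm : Dc2.IsSymm)
    (hDc1 : Dc1.PosDef) (hDc2 : Dc2.PosDef)
    (R2 : Matrix (Fin m ⊕ (Fin s ⊕ Fin m)) (Fin m ⊕ (Fin s ⊕ Fin m)) ℝ)
    (hR2 : R2 = Matrix.fromBlocks (Dc1 + Dc2) (Matrix.fromCols (0 : Matrix (Fin m) (Fin s) ℝ) Dc1)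
      (Matrix.fromRows (0 : Matrix (Fin s) (Fin m) ℝ) Dc1)
      (Matrix.fromBlocks (0 : Matrix (Fin s) (Fin s) ℝ) 0 0 Dc1))
    (W : EuclideanSpace ℝ (Fin m ⊕ (Fin s ⊕ Fin m)) → ℝ) (hW : ContDiff ℝ 1 W)
    (w : ℝ → EuclideanSpace ℝ (Fin m ⊕ (Fin s ⊕ Fin m))) (t : ℝ)
    (hw : HasDerivAt w
      (toE ((J (w t) - R1 (w t) - R2).mulVec (toV (gradient W (w t))))) t) :
    deriv (fun τ => W (w τ)) t ≤
      -((fun i => toV (gradient W (w t)) (Sum.inl i)) ⬝ᵥ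
          Dc2.mulVec (fun i => toV (gradient W (w t)) (Sum.inl i)))
      - (((fun i => toV (gradient W (w t)) (Sum.inl i)) +
            (fun i => toV (gradient W (w t)) (Sum.inr (Sum.inr i)))) ⬝ᵥ
          Dc1.mulVec ((fun i => toV (gradient W (w t)) (Sum.inl i)) +
            (fun i => toV (gradient W (w t)) (Sum.inr (Sum.inr i))))) := by
  set g : EuclideanSpace ℝ (Fin m ⊕ (Fin s ⊕ Fin m)) := gradient W (w t) with hg
  set gv : (Fin m ⊕ (Fin s ⊕ Fin m)) → ℝ := toV g with hgv
  -- derivative computation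
  have hdiff : DifferentiableAt ℝ W (w t) := (hW.differentiable one_ne_zero).differentiableAt
  have hgrad := hdiff.hasGradientAt
  have hd := hgrad.hasFDerivAt.comp_hasDerivAt t hw
  have hderiv : deriv (fun τ => W (w τ)) t
      = gv ⬝ᵥ (J (w t) - R1 (w t) - R2).mulVec gv := by
    rw [show (fun τ => W (w τ)) = W ∘ w from rfl, hd.deriv,
      InnerProductSpace.toDual_apply_apply]
    show (inner ℝ g (toE ((J (w t) - R1 (w t) - R2).mulVec gv)) : ℝ) = _
    simp [toE, toV, hgv, PiLp.inner_apply, dotProduct, mul_comm]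
  -- skew term vanishes
  have hJ0 : gv ⬝ᵥ (J (w t)).mulVec gv = 0 := by
    have h2 : -(J (w t))ᵀ = J (w t) := by rw [hJ, neg_neg]
    have h1 : gv ⬝ᵥ (J (w t)).mulVec gv = -(gv ⬝ᵥ (J (w t)).mulVec gv) := by
      conv_lhs => rw [← h2, neg_mulVec, dotProduct_neg, mulVec_transpose,
        dotProduct_comm, ← dotProduct_mulVec]
    linarith
  -- symmetry helper
  have hsym : ∀ x y : Fin m → ℝ, x ⬝ᵥ Dc1.mulVec y = y ⬝ᵥ Dc1.mulVec x := by
    intro x y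
    conv_lhs => rw [dotProduct_mulVec, ← hDc1symm.eq, vecMul_transpose, dotProduct_comm]
  -- R2 quadratic form
  set a : Fin m → ℝ := fun i => gv (Sum.inl i) with ha
  set b : Fin s → ℝ := fun i => gv (Sum.inr (Sum.inl i)) with hb
  set c : Fin m → ℝ := fun i => gv (Sum.inr (Sum.inr i)) with hc
  have hgvs : gv = Sum.elim a (Sum.elim b c) := by
    funext i; rcases i with i | (i | i) <;> rfl
  have hR2q : gv ⬝ᵥ R2.mulVec gv
      = a ⬝ᵥ Dc2.mulVec a + (a + c) ⬝ᵥ Dc1.mulVec (a + c) := by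
    rw [hR2, hgvs]
    simp [fromBlocks_mulVec, fromCols_mulVec_sumElim, fromRows_mulVec,
      sumElim_dotProduct_sumElim, add_mulVec, mulVec_add, dotProduct_add,
      add_dotProduct, Sum.elim_comp_inl, Sum.elim_comp_inr]
    ring
  have hR1' := hR1 (w t) gv
  rw [hderiv, sub_mulVec, sub_mulVec, dotProduct_sub, dotProduct_sub, hJ0, hR2q]
  have : (fun i => gv (Sum.inl i)) = a := rfl
  linarith
end

section
/- In the coordinates w = (x_a, x_u, x_a - x_c), if x_a, x_u, x_c satisfy the closed-loop equations obtained by substituting the control law u = -(J_{aa}+D_{c1}+D_{c2}+D_{c3})∇_{x_a}ℋ - (D_{c1}+D_{c3})K_i(x_a - x_c), ẋ_c = -(D_{c2}+D_{c3})∇_{x_a}ℋ + J_{au}∇_{x_u}ℋ into the disturbed pH system, then w satisfies ẇ = (𝒥 - ℛ)∇𝒲 with 𝒥 = [[0, J_{au}, 0],[-J_{au}^T, J_{uu}, 0],[0,0,0]], ℛ = [[R_{aa}+D_{c1}+D_{c2}+D_{c3}, R_{au}, D_{c1}+D_{c3}],[R_{au}^T, R_{uu}, 0],[R_{aa}+D_{c1},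 R_{au}, D_{c1}+D_{c3}]], and 𝒲(w) = ℋ(w_a,w_u) + ½‖w_c + K_i^{-1}(D_{c1}+D_{c3})^{-1}d‖²_{K_i}. -/
open Matrix

noncomputable def pCLM {ι κ : Type*} [Fintype ι] [Fintype κ] (f : κ → ι) :
    EuclideanSpace ℝ ι →L[ℝ] EuclideanSpace ℝ κ :=
  LinearMap.toContinuousLinearMap <|
    ((WithLp.linearEquiv 2 ℝ (κ → ℝ)).symm.toLinearMap.comp
      ((LinearMap.pi fun k => LinearMap.proj (f k)).comp
        (WithLp.linearEquiv 2 ℝ (ι → ℝ)).toLinearMap))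

theorem pCLM_apply {ι κ : Type*} [Fintype ι] [Fintype κ] (f : κ → ι) (v : EuclideanSpace ℝ ι) :
    pCLM f v = toE (fun k => toV v (f k)) := by
  simp [pCLM, LinearMap.coe_toContinuousLinearMap']; rfl

noncomputable def matCLM {n : Type*} [Fintype n] [DecidableEq n] (A : Matrix n n ℝ) :
    EuclideanSpace ℝ n →L[ℝ] EuclideanSpace ℝ n :=
  LinearMap.toContinuousLinearMap (Matrix.toEuclideanLin A)

theorem matCLM_apply {n : Type*} [Fintype n] [DecidableEq n] (A : Matrix n n ℝ)
    (x : EuclideanSpace ℝ n) : matCLM A x = toE (A.mulVec (toV x)) := by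
  simp [matCLM, LinearMap.coe_toContinuousLinearMap', Matrix.toEuclideanLin_apply]; rfl

noncomputable def toECLM {ι : Type*} [Fintype ι] : (ι → ℝ) →L[ℝ] EuclideanSpace ℝ ι :=
  ((PiLp.continuousLinearEquiv 2 ℝ (fun _ : ι => ℝ)).symm : _ →L[ℝ] _)

lemma toECLM_apply {ι : Type*} [Fintype ι] (v : ι → ℝ) : toECLM v = toE v := rfl

lemma inner_eq_dot {ι : Type*} [Fintype ι] (x y : EuclideanSpace ℝ ι) :
    inner ℝ x y = toV x ⬝ᵥ toV y := by
  simp [PiLp.inner_apply, RCLike.inner_apply, dotProduct, toV, mul_comm]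

lemma toV_toE {ι : Type*} [Fintype ι] (v : ι → ℝ) : toV (toE v) = v := rfl
lemma toE_apply {ι : Type*} [Fintype ι] (v : ι → ℝ) (k : ι) : toE v k = v k := rfl
lemma toV_add {ι : Type*} [Fintype ι] (x y : EuclideanSpace ℝ ι) :
    toV (x + y) = toV x + toV y := rfl

lemma sum_elim_sub {α β γ : Type*} [Sub γ] (a c : α → γ) (b d : β → γ) :
    Sum.elim a b - Sum.elim c d = Sum.elim (a - c) (b - d) :=
  funext fun k => by cases k <;> rfl

lemma sum_elim_add {α β γ : Type*} [Add γ] (a c : α → γ) (b d : β → γ) :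
    Sum.elim a b + Sum.elim c d = Sum.elim (a + c) (b + d) :=
  funext fun k => by cases k <;> rfl

theorem stmt_16 {m s : ℕ}
    (H : EuclideanSpace ℝ (Fin m ⊕ Fin s) → ℝ) (hH : ContDiff ℝ 1 H)
    (Jaa Raa : EuclideanSpace ℝ (Fin m ⊕ Fin s) → Matrix (Fin m) (Fin m) ℝ)
    (Juu Ruu : EuclideanSpace ℝ (Fin m ⊕ Fin s) → Matrix (Fin s) (Fin s) ℝ)
    (Jau Rau : EuclideanSpace ℝ (Fin m ⊕ Fin s) → Matrix (Fin m) (Fin s) ℝ)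
    (hJaa : ∀ x, (Jaa x)ᵀ = -(Jaa x)) (hJuu : ∀ x, (Juu x)ᵀ = -(Juu x))
    (hRaa : ∀ x, (Raa x).IsSymm) (hRuu : ∀ x, (Ruu x).IsSymm)
    (Ki Dc1 Dc2 Dc3 : Matrix (Fin m) (Fin m) ℝ)
    (hKisymm : Ki.IsSymm) (hKi : Ki.PosDef)
    (hDc1symm : Dc1.IsSymm) (hDc1 : Dc1.PosDef)
    (hDc2symm : Dc2.IsSymm) (hDc2 : Dc2.PosDef)
    (hDc3symm : Dc3.IsSymm) (hDc3 : Dc3.PosDef)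
    (d : Fin m → ℝ)
    (W : EuclideanSpace ℝ (Fin m ⊕ (Fin s ⊕ Fin m)) → ℝ)
    (hW : W = fun w =>
      H (toE (Sum.elim (fun i => toV w (Sum.inl i)) (fun j => toV w (Sum.inr (Sum.inl j))))) +
      (1 / 2) * (((fun i => toV w (Sum.inr (Sum.inr i))) + Ki⁻¹.mulVec ((Dc1 + Dc3)⁻¹.mulVec d)) ⬝ᵥ
        Ki.mulVec ((fun i => toV w (Sum.inr (Sum.inr i))) + Ki⁻¹.mulVec ((Dc1 + Dc3)⁻¹.mulVec d))))
    (xa xc : ℝ → Fin m → ℝ) (xu : ℝ → Fin s → ℝ) (t : ℝ)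
    -- state, gradient blocks and the control law at time `t`
    (X : EuclideanSpace ℝ (Fin m ⊕ Fin s)) (hX : X = toE (Sum.elim (xa t) (xu t)))
    (ga : Fin m → ℝ) (hga : ga = fun i => toV (gradient H X) (Sum.inl i))
    (gu : Fin s → ℝ) (hgu : gu = fun j => toV (gradient H X) (Sum.inr j))
    (u : Fin m → ℝ)
    (hu : u = -(Jaa X + Dc1 + Dc2 + Dc3).mulVec ga - (Dc1 + Dc3).mulVec (Ki.mulVec (xa t - xc t)))
    -- the disturbed open-loop dynamics in closed loop with the controller
    (hxa : HasDerivAt xa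
      ((Jaa X - Raa X).mulVec ga + (Jau X - Rau X).mulVec gu + u - d) t)
    (hxu : HasDerivAt xu
      ((-(Jau X)ᵀ - (Rau X)ᵀ).mulVec ga + (Juu X - Ruu X).mulVec gu) t)
    (hxc : HasDerivAt xc (-(Dc2 + Dc3).mulVec ga + (Jau X).mulVec gu) t) :
    HasDerivAt (fun τ => toE (Sum.elim (xa τ) (Sum.elim (xu τ) (xa τ - xc τ))))
      (toE (((Matrix.fromBlocks (0 : Matrix (Fin m) (Fin m) ℝ)
            (Matrix.fromCols (Jau X) (0 : Matrix (Fin m) (Fin m) ℝ))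
            (Matrix.fromRows (-(Jau X)ᵀ) (0 : Matrix (Fin m) (Fin m) ℝ))
            (Matrix.fromBlocks (Juu X) (0 : Matrix (Fin s) (Fin m) ℝ)
              (0 : Matrix (Fin m) (Fin s) ℝ) (0 : Matrix (Fin m) (Fin m) ℝ)))
          - (Matrix.fromBlocks (Raa X + Dc1 + Dc2 + Dc3)
              (Matrix.fromCols (Rau X) (Dc1 + Dc3))
              (Matrix.fromRows (Rau X)ᵀ (Raa X + Dc1))
              (Matrix.fromBlocks (Ruu X) (0 : Matrix (Fin s) (Fin m) ℝ)
                (Rau X) (Dc1 + Dc3)))).mulVec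
        (toV (gradient W (toE (Sum.elim (xa t) (Sum.elim (xu t) (xa t - xc t)))))))) t := by
  classical
  have hKidet : IsUnit Ki.det := isUnit_iff_ne_zero.2 (ne_of_gt hKi.det_pos)
  have hDdet : IsUnit (Dc1 + Dc3).det := isUnit_iff_ne_zero.2 (ne_of_gt (hDc1.add hDc3).det_pos)
  have hKiinv : ∀ v : Fin m → ℝ, Ki.mulVec (Ki⁻¹.mulVec v) = v := fun v => by
    rw [Matrix.mulVec_mulVec, Matrix.mul_nonsing_inv _ hKidet, Matrix.one_mulVec]
  have hDinv : (Dc1 + Dc3).mulVec ((Dc1 + Dc3)⁻¹.mulVec d) = d := by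
    rw [Matrix.mulVec_mulVec, Matrix.mul_nonsing_inv _ hDdet, Matrix.one_mulVec]
  set wc : Fin m → ℝ := xa t - xc t with hwc
  set c : Fin m → ℝ := Ki⁻¹.mulVec ((Dc1 + Dc3)⁻¹.mulVec d) with hc
  set gc : Fin m → ℝ := Ki.mulVec wc + (Dc1 + Dc3)⁻¹.mulVec d with hgc
  set w0 : EuclideanSpace ℝ (Fin m ⊕ (Fin s ⊕ Fin m)) :=
    toE (Sum.elim (xa t) (Sum.elim (xu t) wc)) with hw0
  have hLw0 : pCLM (Sum.elim Sum.inl (Sum.inr ∘ Sum.inl) :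
      (Fin m ⊕ Fin s) → (Fin m ⊕ (Fin s ⊕ Fin m))) w0 = X := by
    rw [pCLM_apply, hX]; congr 1; funext k; cases k <;> rfl
  have hgradH : toV (gradient H X) = Sum.elim ga gu := by
    funext k; cases k <;> simp [hga, hgu]
  have hsym : ∀ x y : Fin m → ℝ, x ⬝ᵥ Ki.mulVec y = y ⬝ᵥ Ki.mulVec x := by
    intro x y
    rw [Matrix.dotProduct_mulVec, ← Matrix.mulVec_transpose, hKisymm.eq, dotProduct_comm]
  have hKiwcc : Ki.mulVec (wc + c) = gc := by
    rw [Matrix.mulVec_add, hc, hKiinv, hgc]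
  -- the gradient of W
  have hgradW : gradient W w0 = toE (Sum.elim ga (Sum.elim gu gc)) := by
    apply HasGradientAt.gradient
    rw [hasGradientAt_iff_hasFDerivAt]
    have hWeq : W = fun w =>
        H (pCLM (Sum.elim Sum.inl (Sum.inr ∘ Sum.inl)) w) +
        (1 / 2 : ℝ) * (inner ℝ (pCLM (fun i : Fin m => Sum.inr (Sum.inr i)) w + toE c)
          (matCLM Ki (pCLM (fun i : Fin m => Sum.inr (Sum.inr i)) w + toE c)) : ℝ) := by
      rw [hW]; funext w
      have h1 : (fun k => toV w (Sum.elim Sum.inl (Sum.inr ∘ Sum.inl) k)) =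
          Sum.elim (fun i => toV w (Sum.inl i)) (fun j => toV w (Sum.inr (Sum.inl j))) := by
        funext k; cases k <;> rfl
      simp only [pCLM_apply, matCLM_apply, inner_eq_dot, toV_add, toV_toE, h1]
    have hHF : HasFDerivAt H ((InnerProductSpace.toDual ℝ _) (gradient H X))
        (pCLM (Sum.elim Sum.inl (Sum.inr ∘ Sum.inl) :
          (Fin m ⊕ Fin s) → (Fin m ⊕ (Fin s ⊕ Fin m))) w0) := by
      rw [hLw0]
      exact hasGradientAt_iff_hasFDerivAt.1 ((hH.differentiable one_ne_zero X).hasGradientAt)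
    have h1 := hHF.comp w0 (pCLM (Sum.elim Sum.inl (Sum.inr ∘ Sum.inl) :
      (Fin m ⊕ Fin s) → (Fin m ⊕ (Fin s ⊕ Fin m)))).hasFDerivAt
    have hA : HasFDerivAt (fun w => pCLM (fun i : Fin m => Sum.inr (Sum.inr i)) w + toE c)
        (pCLM (fun i : Fin m => Sum.inr (Sum.inr i))) w0 := by
      exact ((pCLM (fun i : Fin m => (Sum.inr (Sum.inr i) :
        Fin m ⊕ (Fin s ⊕ Fin m)))).hasFDerivAt (x := w0)).add_const (toE c)
    have hB := (matCLM Ki).hasFDerivAt.comp w0 hA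
    have hIn := HasFDerivAt.inner ℝ hA hB
    have h2 := hIn.const_mul (1 / 2 : ℝ)
    have hsum := h1.add h2
    rw [hWeq]
    refine hsum.congr_fderiv ?_
    symm
    apply ContinuousLinearMap.ext
    intro v
    simp only [ContinuousLinearMap.add_apply, ContinuousLinearMap.smul_apply,
      ContinuousLinearMap.comp_apply, fderivInnerCLM_apply, InnerProductSpace.toDual_apply_apply,
      ContinuousLinearMap.prod_apply, smul_eq_mul, inner_eq_dot, pCLM_apply, matCLM_apply,
      toV_add, toV_toE, hgradH, hw0, Sum.elim_inl, Sum.elim_inr]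
    have hLv : (fun k => toV v (Sum.elim Sum.inl (Sum.inr ∘ Sum.inl) k)) =
        Sum.elim (fun i => toV v (Sum.inl i)) (fun j => toV v (Sum.inr (Sum.inl j))) := by
      funext k; cases k <;> rfl
    have hv : toV v = Sum.elim (fun i => toV v (Sum.inl i))
        (Sum.elim (fun j => toV v (Sum.inr (Sum.inl j)))
          (fun i => toV v (Sum.inr (Sum.inr i)))) := by
      funext k; rcases k with i | (j | i) <;> rfl
    rw [hLv, hv, sumElim_dotProduct_sumElim, sumElim_dotProduct_sumElim,
      sumElim_dotProduct_sumElim]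
    have hwcfun : (fun i => wc i) = wc := rfl
    rw [hwcfun, hsym (wc + c) _, hKiwcc, dotProduct_comm _ gc]
    simp only [Sum.elim_inl, Sum.elim_inr, Function.comp, matCLM_apply, toV_toE, toV_add,
      toE_apply, Matrix.mulVec_add, hc, hKiinv]
    rw [dotProduct_comm (fun i => toV v (Sum.inr (Sum.inr i)))]
    ring
  -- derivative of the curve
  set va : Fin m → ℝ := (Jaa X - Raa X).mulVec ga + (Jau X - Rau X).mulVec gu + u - d with hva
  set vu : Fin s → ℝ := (-(Jau X)ᵀ - (Rau X)ᵀ).mulVec ga + (Juu X - Ruu X).mulVec gu with hvu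
  set vc : Fin m → ℝ := -(Dc2 + Dc3).mulVec ga + (Jau X).mulVec gu with hvc
  have hDval : HasDerivAt (fun τ => Sum.elim (xa τ) (Sum.elim (xu τ) (xa τ - xc τ)))
      (Sum.elim va (Sum.elim vu (va - vc))) t := by
    rw [hasDerivAt_pi]
    intro k
    rcases k with i | (j | i)
    · exact (hasDerivAt_pi.1 hxa) i
    · exact (hasDerivAt_pi.1 hxu) j
    · exact (hasDerivAt_pi.1 (hxa.sub hxc)) i
  have final := toECLM.hasFDerivAt.comp_hasDerivAt t hDval
  have hfun : (fun τ => toE (Sum.elim (xa τ) (Sum.elim (xu τ) (xa τ - xc τ)))) =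
      (fun τ => toECLM (Sum.elim (xa τ) (Sum.elim (xu τ) (xa τ - xc τ)))) := rfl
  rw [hfun]
  refine final.congr_deriv ?_
  symm
  rw [toECLM_apply, hgradW, toV_toE]
  congr 1
  funext k
  rcases k with i | (j | i) <;>
    simp only [Matrix.sub_mulVec, Pi.sub_apply, Matrix.fromBlocks_mulVec, Sum.elim_inl,
      Sum.elim_inr, Sum.elim_comp_inl, Sum.elim_comp_inr, Matrix.fromRows_mulVec,
      Matrix.fromCols_mulVec_sumElim, Pi.add_apply, hva, hvu, hvc, hu, hgc,
      Matrix.add_mulVec, Matrix.neg_mulVec, Matrix.zero_mulVec, Matrix.mulVec_add, hDinv,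
      Pi.neg_apply, Pi.zero_apply, toE_apply] <;>
    ring
end

section
/- Let R_aa ⪰ 0 symmetric, D ≻ 0 symmetric, both m×m, with 3D - R_aa ⪰ 0, and let [[R_aa, R_au],[R_au^T, R_uu]] ⪰ 0. Then for all vectors a, c ∈ ℝ^m and u ∈ ℝ^s: a^T(R_aa + D)a + 2a^T R_au u + u^T R_uu u + a^T(R_aa + D)c + u^T R_au^T c + c^T D c ≥ 0. -/
open Matrix

theorem stmt_19 {m s : ℕ}
    (Raa D : Matrix (Fin m) (Fin m) ℝ) (Ruu : Matrix (Fin s) (Fin s) ℝ)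
    (Rau : Matrix (Fin m) (Fin s) ℝ)
    (hRaa : Raa.IsSymm) (hRuu : Ruu.IsSymm) (hDsymm : D.IsSymm)
    (hRaaPSD : Raa.PosSemidef) (hD : D.PosDef)
    (hbound : ((3 : ℝ) • D - Raa).PosSemidef)
    (hR : (Matrix.fromBlocks Raa Rau Rauᵀ Ruu).PosSemidef) :
    ∀ (a c : Fin m → ℝ) (u : Fin s → ℝ),
      0 ≤ a ⬝ᵥ (Raa + D).mulVec a + 2 * (a ⬝ᵥ Rau.mulVec u) + u ⬝ᵥ Ruu.mulVec u
          + a ⬝ᵥ (Raa + D).mulVec c + u ⬝ᵥ Rauᵀ.mulVec c + c ⬝ᵥ D.mulVec c := by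
  intro a c u
  have hsymm : ∀ (M : Matrix (Fin m) (Fin m) ℝ), M.IsSymm → ∀ x y : Fin m → ℝ,
      x ⬝ᵥ M.mulVec y = y ⬝ᵥ M.mulVec x := by
    intro M hM x y
    conv_lhs => rw [← hM]
    rw [Matrix.dotProduct_mulVec, Matrix.vecMul_transpose, dotProduct_comm]
  have hcross : u ⬝ᵥ Rauᵀ.mulVec c = c ⬝ᵥ Rau.mulVec u := by
    rw [Matrix.dotProduct_mulVec, Matrix.vecMul_transpose, dotProduct_comm]
  set b : Fin m → ℝ := a + (1/2 : ℝ) • c with hb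
  -- block quadratic form at (b, u)
  have h1 : 0 ≤ b ⬝ᵥ Raa.mulVec b + b ⬝ᵥ Rau.mulVec u + u ⬝ᵥ Rauᵀ.mulVec b
      + u ⬝ᵥ Ruu.mulVec u := by
    have := hR.dotProduct_mulVec_nonneg (Sum.elim b u)
    simpa only [Matrix.fromBlocks_mulVec, star_trivial, Sum.elim_comp_inl,
      Sum.elim_comp_inr, sumElim_dotProduct_sumElim, dotProduct_add,
      add_assoc] using this
  have h2 : 0 ≤ b ⬝ᵥ D.mulVec b := hD.posSemidef.dotProduct_mulVec_nonneg b
  have h3 : 0 ≤ c ⬝ᵥ ((3 : ℝ) • D - Raa).mulVec c := hbound.dotProduct_mulVec_nonneg c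
  have hcross2 : u ⬝ᵥ Rauᵀ.mulVec b = b ⬝ᵥ Rau.mulVec u := by
    rw [Matrix.dotProduct_mulVec, Matrix.vecMul_transpose, dotProduct_comm]
  have e1 : c ⬝ᵥ Raa.mulVec a = a ⬝ᵥ Raa.mulVec c := hsymm Raa hRaa c a
  have e2 : c ⬝ᵥ D.mulVec a = a ⬝ᵥ D.mulVec c := hsymm D hDsymm c a
  rw [hcross2] at h1
  simp only [hb, Matrix.mulVec_add, Matrix.mulVec_smul, Matrix.add_mulVec,
    dotProduct_add, add_dotProduct, dotProduct_smul, smul_dotProduct,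
    smul_eq_mul, Matrix.sub_mulVec, Matrix.smul_mulVec, dotProduct_sub] at h1 h2 h3 ⊢
  rw [hcross]
  nlinarith [h1, h2, h3, e1, e2]
end
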